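/- arXiv:2312.01379 — 3 statements merged into one kernel-verified Lean document; each statement's English description precedes it below -/
import Mathlib

section
/- For any real random variable with finite fourth moment, nonzero variance, skewness γ and kurtosis κ, Pearson's inequality κ ≥ 1 + γ² holds. -/
open MeasureTheory

theorem pearson_inequality {Ω : Type*} [MeasureSpace Ω]
    [IsProbabilityMeasure (volume : Measure Ω)]
    (Z : Ω → ℝ) (hZ : MemLp Z 4)
    (m σ2 γ κ : ℝ)
    (hm : m = ∫ ω, Z ω)
    (hσ2 : σ2 = ∫ ω, (Z ω - m) ^ 2) (hσpos : 0 < σ2)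
    (hγ : γ = (∫ ω, (Z ω - m) ^ 3) / Real.sqrt σ2 ^ 3)
    (hκ : κ = (∫ ω, (Z ω - m) ^ 4) / σ2 ^ 2) :
    1 + γ ^ 2 ≤ κ := by
  set W : Ω → ℝ := fun ω => Z ω - m with hW
  have hWp : MemLp W 4 := hZ.sub (memLp_const m)
  have h4 : Integrable (fun ω => W ω ^ 4) := by
    have h := hWp.integrable_norm_rpow (by norm_num) (by norm_num)
    refine h.congr (Filter.Eventually.of_forall fun ω => ?_)
    show ‖W ω‖ ^ ENNReal.toReal 4 = W ω ^ 4
    have h4' : ENNReal.toReal 4 = ((4 : ℕ) : ℝ) := by norm_num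
    rw [h4', Real.rpow_natCast, Real.norm_eq_abs, pow_abs, abs_of_nonneg (by positivity)]
  have hmeas : AEStronglyMeasurable W volume := hWp.aestronglyMeasurable
  have hk : ∀ k : ℕ, k ≤ 4 → Integrable (fun ω => W ω ^ k) := by
    intro k hkle
    refine Integrable.mono' (h4.add (integrable_const 1)) (hmeas.pow k)
      (Filter.Eventually.of_forall fun ω => ?_)
    simp only [Pi.add_apply, Real.norm_eq_abs, abs_pow]
    have hnn4 : (0 : ℝ) ≤ W ω ^ 4 := by positivity
    rcases le_or_gt (|W ω|) 1 with h | h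
    · have : |W ω| ^ k ≤ 1 := pow_le_one₀ (abs_nonneg _) h
      linarith
    · have hle : |W ω| ^ k ≤ |W ω| ^ 4 := pow_le_pow_right₀ h.le hkle
      have heq : |W ω| ^ 4 = W ω ^ 4 := by rw [pow_abs, abs_of_nonneg (by positivity)]
      linarith
  have h1 : Integrable W := by simpa using hk 1 (by norm_num)
  have h2 : Integrable (fun ω => W ω ^ 2) := hk 2 (by norm_num)
  have h3 : Integrable (fun ω => W ω ^ 3) := hk 3 (by norm_num)
  have hZint : Integrable Z := by
    have h' : Integrable (fun ω => W ω + m) := h1.add (integrable_const m)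
    exact h'.congr (Filter.Eventually.of_forall fun ω => by simp [hW])
  have hmean : ∫ ω, W ω = 0 := by
    rw [hW]
    rw [integral_sub hZint (integrable_const m)]
    simp [← hm]
  set A3 : ℝ := ∫ ω, W ω ^ 3 with hA3
  set A4 : ℝ := ∫ ω, W ω ^ 4 with hA4
  set a : ℝ := A3 / σ2 with ha
  have hA2 : (∫ ω, W ω ^ 2) = σ2 := hσ2.symm
  have key : 0 ≤ A4 - 2 * a * A3 + (a ^ 2 - 2 * σ2) * σ2 + σ2 ^ 2 := by
    have expand : ∀ ω, (W ω ^ 2 - a * W ω - σ2) ^ 2 =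
        W ω ^ 4 + (-(2 * a)) * W ω ^ 3 + (a ^ 2 - 2 * σ2) * W ω ^ 2
          + (2 * a * σ2) * W ω + σ2 ^ 2 := by intro ω; ring
    have hnn : 0 ≤ ∫ ω, (W ω ^ 2 - a * W ω - σ2) ^ 2 :=
      integral_nonneg fun ω => sq_nonneg _
    rw [integral_congr_ae (Filter.Eventually.of_forall expand)] at hnn
    have i3 : Integrable (fun ω => (-(2 * a)) * W ω ^ 3) := h3.const_mul _
    have i2 : Integrable (fun ω => (a ^ 2 - 2 * σ2) * W ω ^ 2) := h2.const_mul _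
    have i1 : Integrable (fun ω => (2 * a * σ2) * W ω) := h1.const_mul _
    have i43 : Integrable (fun ω => W ω ^ 4 + (-(2 * a)) * W ω ^ 3) := h4.add i3
    have i432 : Integrable (fun ω => W ω ^ 4 + (-(2 * a)) * W ω ^ 3
        + (a ^ 2 - 2 * σ2) * W ω ^ 2) := i43.add i2
    have i4321 : Integrable (fun ω => W ω ^ 4 + (-(2 * a)) * W ω ^ 3
        + (a ^ 2 - 2 * σ2) * W ω ^ 2 + (2 * a * σ2) * W ω) := i432.add i1
    rw [integral_add i4321 (integrable_const _), integral_add i432 i1,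
      integral_add i43 i2, integral_add h4 i3,
      integral_const_mul, integral_const_mul, integral_const_mul, hmean, hA2,
      integral_const] at hnn
    simp only [smul_eq_mul, measure_univ, ENNReal.toReal_one, probReal_univ, one_mul, mul_zero, add_zero,
      ← hA3, ← hA4] at hnn
    linarith
  have hsq : (Real.sqrt σ2 ^ 3) ^ 2 = σ2 ^ 3 := by
    rw [← pow_mul, show (3 : ℕ) * 2 = 2 * 3 by norm_num, pow_mul, Real.sq_sqrt hσpos.le]
  have hkey2 : 0 ≤ A4 - A3 ^ 2 / σ2 - σ2 ^ 2 := by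
    have haux : 2 * a * A3 - a ^ 2 * σ2 = A3 ^ 2 / σ2 := by
      rw [ha]
      field_simp
      ring
    nlinarith [key]
  have hγ2 : γ ^ 2 = A3 ^ 2 / σ2 ^ 3 := by
    rw [hγ, div_pow, hsq]
  rw [hκ, hγ2, ← sub_nonneg]
  have heq : A4 / σ2 ^ 2 - (1 + A3 ^ 2 / σ2 ^ 3) = (A4 - A3 ^ 2 / σ2 - σ2 ^ 2) / σ2 ^ 2 := by
    field_simp
    ring
  rw [heq]
  exact div_nonneg hkey2 (by positivity)
end

section
/- Let Σ be symmetric positive definite, b ∈ ℝ^D nonzero, and suppose the eigenvalues of Σ take exactly M distinct values. Then for any L ≥ M, the minimum of ‖β − Σ⁻¹b‖²_Σ over β ∈ K_L(Σ, b) is zero. -/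
open Matrix

/-- The Krylov subspace of order `L` generated by matrix `A` and vector `b`. -/
def krylov {D : ℕ} (A : Matrix (Fin D) (Fin D) ℝ) (b : Fin D → ℝ) (L : ℕ) :
    Submodule ℝ (Fin D → ℝ) :=
  Submodule.span ℝ {v | ∃ i < L, v = (A ^ i).mulVec b}

theorem pls_converges_after_M_components {D : ℕ} (S : Matrix (Fin D) (Fin D) ℝ)
    (hpd : S.PosDef) (hS : S.IsHermitian)
    (b : Fin D → ℝ) (hb : b ≠ 0) (M : ℕ)
    (hM : (Finset.univ.image hS.eigenvalues).card = M)
    (L : ℕ) (hL : M ≤ L) :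
    IsLeast {r : ℝ | ∃ β ∈ krylov S b L,
      r = (β - S⁻¹.mulVec b) ⬝ᵥ S.mulVec (β - S⁻¹.mulVec b)} 0 := by
  classical
  set U : Matrix (Fin D) (Fin D) ℝ := (hS.eigenvectorUnitary : Matrix (Fin D) (Fin D) ℝ) with hU
  have hUU : star U * U = 1 := mem_unitaryGroup_iff'.mp hS.eigenvectorUnitary.2
  have hUU' : U * star U = 1 := mem_unitaryGroup_iff.mp hS.eigenvectorUnitary.2
  have hspec : S = U * diagonal hS.eigenvalues * star U := by
    have := hS.spectral_theorem
    simpa [RCLike.ofReal_real_eq_id, Function.comp] using this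
  set lam := hS.eigenvalues with hlam
  set c : Fin D → ℝ := (star U).mulVec b with hc
  -- key multiplication fact
  have hmul : ∀ w : Fin D → ℝ, S.mulVec (U.mulVec w) = U.mulVec (fun j => lam j * w j) := by
    intro w
    have hd : diagonal lam *ᵥ w = fun j => lam j * w j := funext fun j => mulVec_diagonal _ _ _
    rw [mulVec_mulVec, hspec, mul_assoc, mul_assoc, hUU, mul_one, ← mulVec_mulVec, hd]
  have hpow : ∀ i : ℕ, (S ^ i).mulVec b = U.mulVec (fun j => lam j ^ i * c j) := by
    intro i
    induction i with
    | zero => simp [c, mulVec_mulVec, hUU']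
    | succ n ih =>
      rw [pow_succ', ← mulVec_mulVec, ih, hmul]
      exact congrArg U.mulVec (funext fun j => by ring)
  -- interpolation polynomial
  set T : Finset ℝ := Finset.univ.image lam with hT
  set q : Polynomial ℝ := Lagrange.interpolate T id (fun x => x⁻¹) with hq
  have hqdeg : q.degree < M := by
    rw [← hM]
    exact Lagrange.degree_interpolate_lt _ (Set.injOn_id _)
  have hqeval : ∀ j, q.eval (lam j) = (lam j)⁻¹ := by
    intro j
    have hjm : lam j ∈ T := Finset.mem_image_of_mem _ (Finset.mem_univ j)
    exact Lagrange.eval_interpolate_at_node (fun x => x⁻¹) (Set.injOn_id _) hjm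
  have hlampos : ∀ j, 0 < lam j := hpd.eigenvalues_pos
  -- the candidate vector
  set v : Fin D → ℝ := ∑ i ∈ Finset.range M, q.coeff i • (S ^ i).mulVec b with hv
  have hvmem : v ∈ krylov S b L := by
    refine Submodule.sum_mem _ fun i hi => Submodule.smul_mem _ _ ?_
    exact Submodule.subset_span ⟨i, lt_of_lt_of_le (Finset.mem_range.mp hi) hL, rfl⟩
  have hsum : ∀ j, ∑ i ∈ Finset.range M, q.coeff i * lam j ^ i = (lam j)⁻¹ := by
    intro j
    have hq0 : q ≠ 0 := by
      intro h
      have h2 := hqeval j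
      rw [h] at h2
      simp at h2
      exact absurd h2.symm (hlampos j).ne'
    have hnd : q.natDegree < M := (Polynomial.natDegree_lt_iff_degree_lt hq0).mpr hqdeg
    rw [← Polynomial.eval_eq_sum_range' hnd, hqeval j]
  have hvU : v = U.mulVec (fun j => (lam j)⁻¹ * c j) := by
    rw [hv]
    have hterm : ∀ i ∈ Finset.range M, q.coeff i • (S ^ i).mulVec b
        = U.mulVec (fun j => q.coeff i * lam j ^ i * c j) := by
      intro i _
      have hsm : q.coeff i • (fun j => lam j ^ i * c j) = fun j => q.coeff i * lam j ^ i * c j := by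
        funext j
        simp [mul_assoc]
      rw [hpow i, ← U.mulVec_smul, hsm]
    have hms := map_sum U.mulVecLin (fun i => (fun j => q.coeff i * lam j ^ i * c j))
      (Finset.range M)
    simp only [Matrix.mulVecLin_apply] at hms
    have hfs : (∑ i ∈ Finset.range M, fun j => q.coeff i * lam j ^ i * c j)
        = fun j => (lam j)⁻¹ * c j := by
      funext j
      rw [Finset.sum_apply, ← Finset.sum_mul, hsum j]
    rw [Finset.sum_congr rfl hterm, ← hms, hfs]
  have hSv : S.mulVec v = b := by
    rw [hvU, hmul]
    have : (fun j => lam j * ((lam j)⁻¹ * c j)) = c := by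
      funext j
      rw [← mul_assoc, mul_inv_cancel₀ (hlampos j).ne', one_mul]
    rw [this, hc, mulVec_mulVec, hUU', one_mulVec]
  have hdet : IsUnit S.det := isUnit_iff_ne_zero.mpr hpd.det_pos.ne'
  have hinv : S⁻¹.mulVec b = v := by
    rw [← hSv, mulVec_mulVec, nonsing_inv_mul _ hdet, one_mulVec]
  constructor
  · exact ⟨v, hvmem, by rw [hinv]; simp⟩
  · rintro r ⟨β, -, rfl⟩
    have := hpd.posSemidef.dotProduct_mulVec_nonneg (β - S⁻¹.mulVec b)
    simpa using this
end

section
/- Let Σ be symmetric positive definite with eigenvalues λ_1,…,λ_D (with orthonormal eigenvectors u_d), b ∈ ℝ^D, β̂ = Σ⁻¹b with coordinates ξ_d = u_dᵀβ̂. Then min over β ∈ K_L(Σ,b) of ‖β − β̂‖²_Σ ≤ D(1 − c_Lᵀ H_L⁻¹ c_L) · ‖β̂‖²_Σ, where H_L is the Hankel matrix of raw eigenvalue moments (H_L)_{ij} = μ'_{i+j} (assumed invertible) and c_L = (μ'_1,…,μ'_L)ᵀ. -/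
open Matrix

private lemma sumdot {n ι : Type*} [Fintype n] (s : Finset ι) (f : ι → n → ℝ) (v : n → ℝ) :
    (∑ i ∈ s, f i) ⬝ᵥ v = ∑ i ∈ s, f i ⬝ᵥ v := by
  simp only [dotProduct, Finset.sum_apply, Finset.sum_mul]
  exact Finset.sum_comm

private lemma dotsum {n ι : Type*} [Fintype n] (s : Finset ι) (f : ι → n → ℝ) (v : n → ℝ) :
    v ⬝ᵥ (∑ i ∈ s, f i) = ∑ i ∈ s, v ⬝ᵥ f i := by
  rw [dotProduct_comm, sumdot]
  exact Finset.sum_congr rfl fun i _ => dotProduct_comm _ _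

theorem pls_ols_distance_bound {D L : ℕ} (S : Matrix (Fin D) (Fin D) ℝ)
    (hpd : S.PosDef) (lam : Fin D → ℝ) (u : Fin D → Fin D → ℝ)
    (horth : ∀ d e, u d ⬝ᵥ u e = if d = e then (1 : ℝ) else 0)
    (heig : ∀ d, S.mulVec (u d) = lam d • u d)
    (b : Fin D → ℝ) (βhat : Fin D → ℝ) (hβ : βhat = S⁻¹.mulVec b)
    (m : ℕ → ℝ) (hm : ∀ k, m k = (1 / (D : ℝ)) * ∑ d, lam d ^ k)
    (H : Matrix (Fin L) (Fin L) ℝ) (hH : ∀ i j, H i j = m ((i : ℕ) + (j : ℕ) + 2))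
    (c : Fin L → ℝ) (hc : ∀ i, c i = m ((i : ℕ) + 1))
    (hinv : IsUnit H) :
    sInf {r : ℝ | ∃ β ∈ krylov S b L, r = (β - βhat) ⬝ᵥ S.mulVec (β - βhat)} ≤
      (D : ℝ) * (1 - c ⬝ᵥ H⁻¹.mulVec c) * (βhat ⬝ᵥ S.mulVec βhat) := by
  classical
  have hSd : IsUnit S.det := isUnit_iff_ne_zero.2 (ne_of_gt hpd.det_pos)
  have hsymm : Sᵀ = S := hpd.isHermitian.eq
  have hdotS : ∀ x y : Fin D → ℝ, x ⬝ᵥ S.mulVec y = S.mulVec x ⬝ᵥ y := by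
    intro x y
    rw [dotProduct_mulVec, ← mulVec_transpose, hsymm]
  have hb : S.mulVec βhat = b := by
    rw [hβ, mulVec_mulVec, mul_nonsing_inv _ hSd, one_mulVec]
  set ξ : Fin D → ℝ := fun d => u d ⬝ᵥ βhat with hξ
  have hdotpow : ∀ (k : ℕ) (d : Fin D) (x : Fin D → ℝ),
      u d ⬝ᵥ (S ^ k).mulVec x = lam d ^ k * (u d ⬝ᵥ x) := by
    intro k
    induction k with
    | zero => intro d x; simp
    | succ n ih =>
      intro d x
      have h1 : (S ^ (n + 1)).mulVec x = (S ^ n).mulVec (S.mulVec x) := by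
        rw [pow_succ, ← mulVec_mulVec]
      have h2 : u d ⬝ᵥ S.mulVec x = lam d * (u d ⬝ᵥ x) := by
        rw [hdotS, heig, smul_dotProduct, smul_eq_mul]
      rw [h1, ih, h2, pow_succ]
      ring
  -- completeness of the orthonormal family
  have hUU : (Matrix.of u)ᵀ * (Matrix.of u) = 1 := by
    rw [mul_eq_one_comm]
    ext d e
    have := horth d e
    simp only [dotProduct] at this
    simp [Matrix.mul_apply, Matrix.one_apply, this]
  have hcomp : ∀ x : Fin D → ℝ, ∑ d, (u d ⬝ᵥ x) • u d = x := by
    intro x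
    funext e
    have h1 : ((Matrix.of u)ᵀ * Matrix.of u).mulVec x e = x e := by
      rw [hUU, one_mulVec]
    calc (∑ d, (u d ⬝ᵥ x) • u d) e
        = ∑ d, ∑ f, u d e * (u d f * x f) := by
          simp only [dotProduct, Finset.sum_apply, smul_eq_mul, Pi.smul_apply, Finset.sum_mul]
          exact Finset.sum_congr rfl fun d _ => Finset.sum_congr rfl fun f _ => by ring
      _ = ∑ f, ∑ d, u d e * (u d f * x f) := Finset.sum_comm
      _ = x e := by
          rw [← h1]
          simp only [Matrix.mulVec, Matrix.mul_apply, dotProduct, Matrix.transpose_apply, Matrix.of_apply, Finset.sum_mul]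
          exact Finset.sum_congr rfl fun f _ => Finset.sum_congr rfl fun d _ => by ring
  have hquad : ∀ x y : Fin D → ℝ,
      x ⬝ᵥ S.mulVec y = ∑ d, lam d * ((u d ⬝ᵥ x) * (u d ⬝ᵥ y)) := by
    intro x y
    conv_lhs => rw [← hcomp x]
    rw [sumdot]
    refine Finset.sum_congr rfl fun d _ => ?_
    rw [smul_dotProduct]
    have h2 : u d ⬝ᵥ S.mulVec y = lam d * (u d ⬝ᵥ y) := by
      have := hdotpow 1 d y; simpa using this
    rw [h2, smul_eq_mul]; ring
  have hlam0 : ∀ d, 0 ≤ lam d := by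
    intro d
    have h1 : u d ⬝ᵥ S.mulVec (u d) = lam d := by
      rw [heig, dotProduct_smul, horth]
      simp
    have h2 : 0 ≤ u d ⬝ᵥ S.mulVec (u d) := by
      have := hpd.posSemidef.dotProduct_mulVec_nonneg (u d); simpa using this
    linarith
  have hHdet : IsUnit H.det := (Matrix.isUnit_iff_isUnit_det H).1 hinv
  set w : Fin L → ℝ := H⁻¹.mulVec c with hw
  have hHw : H.mulVec w = c := by
    rw [hw, mulVec_mulVec, mul_nonsing_inv _ hHdet, one_mulVec]
  have hmom : ∀ k, ∑ e, lam e ^ k = (D : ℝ) * m k := by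
    intro k
    rw [hm]
    rcases Nat.eq_zero_or_pos D with h0 | h0
    · subst h0; simp
    · have hD : (D : ℝ) ≠ 0 := Nat.cast_ne_zero.2 h0.ne'
      field_simp
  set β₀ : Fin D → ℝ := ∑ i : Fin L, w i • (S ^ (i : ℕ)).mulVec b with hβ₀
  have hmem : β₀ ∈ krylov S b L := by
    refine Submodule.sum_mem _ fun i _ => Submodule.smul_mem _ _ ?_
    exact Submodule.subset_span ⟨(i : ℕ), i.isLt, rfl⟩
  set q : Fin D → ℝ := fun d => (∑ i : Fin L, w i * lam d ^ ((i : ℕ) + 1)) - 1 with hq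
  have hz : ∀ d, u d ⬝ᵥ (β₀ - βhat) = q d * ξ d := by
    intro d
    have h1 : u d ⬝ᵥ β₀ = ∑ i : Fin L, w i * lam d ^ ((i : ℕ) + 1) * ξ d := by
      rw [hβ₀, dotsum]
      refine Finset.sum_congr rfl fun i _ => ?_
      have hb' : (S ^ (i : ℕ)).mulVec b = (S ^ ((i : ℕ) + 1)).mulVec βhat := by
        rw [pow_succ, ← mulVec_mulVec, hb]
      rw [dotProduct_smul, hb', hdotpow]
      simp [hξ]; ring
    have h2 : u d ⬝ᵥ (β₀ - βhat) = u d ⬝ᵥ β₀ - ξ d := by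
      rw [show β₀ - βhat = β₀ + (-βhat) from by ring, dotProduct_add, dotProduct_neg]
      rfl
    rw [h2, h1, ← Finset.sum_mul, hq]; ring
  set T : ℝ := ∑ e, q e ^ 2 with hT
  -- compute T
  have hsum1 : ∑ e, ∑ i : Fin L, w i * lam e ^ ((i : ℕ) + 1) = (D : ℝ) * (w ⬝ᵥ c) := by
    rw [Finset.sum_comm]
    have : ∀ i : Fin L, ∑ e, w i * lam e ^ ((i : ℕ) + 1) = w i * ((D : ℝ) * m ((i : ℕ) + 1)) := by
      intro i; rw [← Finset.mul_sum, hmom]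
    simp only [this]
    simp only [dotProduct, Finset.mul_sum]
    exact Finset.sum_congr rfl fun i _ => by rw [hc]; ring
  have hsum2 : ∑ e, (∑ i : Fin L, w i * lam e ^ ((i : ℕ) + 1)) ^ 2
      = (D : ℝ) * (w ⬝ᵥ c) := by
    have hexp : ∀ e, (∑ i : Fin L, w i * lam e ^ ((i : ℕ) + 1)) ^ 2
        = ∑ i : Fin L, ∑ j : Fin L, w i * w j * lam e ^ ((i : ℕ) + (j : ℕ) + 2) := by
      intro e
      rw [sq, Finset.sum_mul_sum]
      refine Finset.sum_congr rfl fun i _ => Finset.sum_congr rfl fun j _ => ?_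
      rw [show (i:ℕ)+(j:ℕ)+2 = ((i:ℕ)+1) + ((j:ℕ)+1) by ring, pow_add]
      ring
    simp only [hexp]
    rw [Finset.sum_comm]
    have h3 : ∀ i : Fin L, ∑ e, ∑ j : Fin L, w i * w j * lam e ^ ((i : ℕ) + (j : ℕ) + 2)
        = ∑ j : Fin L, w i * w j * ((D : ℝ) * H i j) := by
      intro i
      rw [Finset.sum_comm]
      refine Finset.sum_congr rfl fun j _ => ?_
      rw [← Finset.mul_sum, hmom, hH]
    simp only [h3]
    have h4 : w ⬝ᵥ c = ∑ i : Fin L, ∑ j : Fin L, w i * (H i j * w j) := by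
      rw [← hHw]
      simp [dotProduct, Matrix.mulVec, Finset.mul_sum]
    rw [h4, Finset.mul_sum]
    refine Finset.sum_congr rfl fun i _ => ?_
    rw [Finset.mul_sum]
    exact Finset.sum_congr rfl fun j _ => by ring
  have hTval : T = (D : ℝ) * (1 - c ⬝ᵥ H⁻¹.mulVec c) := by
    have hqe : ∀ e, q e ^ 2 = (∑ i : Fin L, w i * lam e ^ ((i : ℕ) + 1)) ^ 2
        - 2 * (∑ i : Fin L, w i * lam e ^ ((i : ℕ) + 1)) + 1 := by
      intro e; rw [hq]; ring
    rw [hT]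
    simp only [hqe]
    rw [Finset.sum_add_distrib, Finset.sum_sub_distrib, hsum2, ← Finset.mul_sum, hsum1]
    have : c ⬝ᵥ H⁻¹.mulVec c = w ⬝ᵥ c := by rw [hw, dotProduct_comm]
    rw [this]
    simp [Finset.card_univ]
    ring
  -- conclusion
  have hval : (β₀ - βhat) ⬝ᵥ S.mulVec (β₀ - βhat)
      ∈ {r : ℝ | ∃ β ∈ krylov S b L, r = (β - βhat) ⬝ᵥ S.mulVec (β - βhat)} :=
    ⟨β₀, hmem, rfl⟩
  have hbdd : BddBelow {r : ℝ | ∃ β ∈ krylov S b L, r = (β - βhat) ⬝ᵥ S.mulVec (β - βhat)} := by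
    refine ⟨0, fun r hr => ?_⟩
    obtain ⟨β, -, rfl⟩ := hr
    have := hpd.posSemidef.dotProduct_mulVec_nonneg (β - βhat)
    simpa using this
  refine le_trans (csInf_le hbdd hval) ?_
  rw [hquad, ← hTval]
  have hstep : ∀ d : Fin D, lam d * ((u d ⬝ᵥ (β₀ - βhat)) * (u d ⬝ᵥ (β₀ - βhat)))
      = (lam d * ξ d ^ 2) * q d ^ 2 := by
    intro d; rw [hz]; ring
  simp only [hstep]
  have hbound : ∀ d ∈ Finset.univ, (lam d * ξ d ^ 2) * q d ^ 2 ≤ (lam d * ξ d ^ 2) * T := by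
    intro d _
    refine mul_le_mul_of_nonneg_left ?_ (mul_nonneg (hlam0 d) (sq_nonneg _))
    exact Finset.single_le_sum (fun e _ => sq_nonneg (q e)) (Finset.mem_univ d)
  refine le_trans (Finset.sum_le_sum hbound) ?_
  rw [← Finset.sum_mul, hquad βhat βhat]
  have : ∀ d : Fin D, lam d * ((u d ⬝ᵥ βhat) * (u d ⬝ᵥ βhat)) = lam d * ξ d ^ 2 := by
    intro d; rw [hξ]; ring
  simp only [this]
  rw [mul_comm]
end
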